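/- If $G$ is a group of nilpotency class at most $2$, then the nonabelian tensor square $G \otimes G$ is abelian. -/

import Mathlib

def tensorSquareRels (G : Type*) [Group G] : Set (FreeGroup (G × G)) :=
  {r | ∃ g g' h : G,
      r = (FreeGroup.of (g * g', h))⁻¹ *
        (FreeGroup.of (g'⁻¹ * g * g', g'⁻¹ * h * g') * FreeGroup.of (g', h))} ∪
  {r | ∃ g h h' : G,
      r = (FreeGroup.of (g, h * h'))⁻¹ *
        (FreeGroup.of (g, h') * FreeGroup.of (h'⁻¹ * g * h', h'⁻¹ * h * h'))}

def TensorSquare (G : Type*) [Group G] : Type _ :=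
  PresentedGroup (tensorSquareRels G)

instance (G : Type*) [Group G] : Group (TensorSquare G) := by
  unfold TensorSquare; infer_instance

open scoped commutatorElement

namespace TensorSquareAux

variable {G : Type*} [Group G]

/-- The generator `g ⊗ h`. -/
def tt (g h : G) : TensorSquare G := PresentedGroup.of (rels := tensorSquareRels G) (g, h)

lemma mk_rel_eq_one {r : FreeGroup (G × G)} (hr : r ∈ tensorSquareRels G) :
    PresentedGroup.mk (tensorSquareRels G) r = 1 := by
  change QuotientGroup.mk r = 1
  refine (QuotientGroup.eq_one_iff r).mpr ?_
  exact Subgroup.subset_normalClosure hr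

lemma rel1 (g g' h : G) :
    tt (g * g') h = tt (g'⁻¹ * g * g') (g'⁻¹ * h * g') * tt g' h := by
  have h1 : ((FreeGroup.of (g * g', h))⁻¹ *
        (FreeGroup.of (g'⁻¹ * g * g', g'⁻¹ * h * g') * FreeGroup.of (g', h))) ∈
        tensorSquareRels G := Or.inl ⟨g, g', h, rfl⟩
  have := mk_rel_eq_one h1
  simp only [map_mul, map_inv] at this
  exact inv_injective (mul_eq_one_iff_eq_inv.mp this)

lemma rel2 (g h h' : G) :
    tt g (h * h') = tt g h' * tt (h'⁻¹ * g * h') (h'⁻¹ * h * h') := by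
  have h1 : ((FreeGroup.of (g, h * h'))⁻¹ *
        (FreeGroup.of (g, h') * FreeGroup.of (h'⁻¹ * g * h', h'⁻¹ * h * h'))) ∈
        tensorSquareRels G := Or.inr ⟨g, h, h', rfl⟩
  have := mk_rel_eq_one h1
  simp only [map_mul, map_inv] at this
  exact inv_injective (mul_eq_one_iff_eq_inv.mp this)

variable (hclass : ∀ a b c : G, ⁅⁅a, b⁆, c⁆ = 1)

include hclass in
/-- In a class-2 group, conjugation by `b*a` equals conjugation by `a*b`. -/
lemma conj_comm (g a b : G) : (b * a)⁻¹ * g * (b * a) = (a * b)⁻¹ * g * (a * b) := by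
  have hz := commutatorElement_eq_one_iff_mul_comm.mp (hclass b a g)
  have e1 : (b * a)⁻¹ * g * (b * a) =
      (a * b)⁻¹ * (⁅b, a⁆⁻¹ * (g * ⁅b, a⁆)) * (a * b) := by group
  rw [e1, ← hz]
  group

/-- Double-expansion identity. -/
lemma keyeq (a b g h : G) :
    tt ((b * a)⁻¹ * g * (b * a)) ((b * a)⁻¹ * h * (b * a)) * tt a b =
      tt a b * tt ((a * b)⁻¹ * g * (a * b)) ((a * b)⁻¹ * h * (a * b)) := by
  have wayA : tt (g * a) (h * b) =
      tt (a⁻¹ * g * a) (a⁻¹ * b * a) *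
        (tt ((b * a)⁻¹ * g * (b * a)) ((b * a)⁻¹ * h * (b * a)) * tt a b) *
        tt (b⁻¹ * a * b) (b⁻¹ * h * b) := by
    rw [rel1 g a (h * b), rel2 a h b,
      show a⁻¹ * (h * b) * a = (a⁻¹ * h * a) * (a⁻¹ * b * a) by group,
      rel2 (a⁻¹ * g * a) (a⁻¹ * h * a) (a⁻¹ * b * a),
      show (a⁻¹ * b * a)⁻¹ * (a⁻¹ * g * a) * (a⁻¹ * b * a) = (b * a)⁻¹ * g * (b * a) by group,
      show (a⁻¹ * b * a)⁻¹ * (a⁻¹ * h * a) * (a⁻¹ * b * a) = (b * a)⁻¹ * h * (b * a) by group]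
    group
  have wayB : tt (g * a) (h * b) =
      tt (a⁻¹ * g * a) (a⁻¹ * b * a) *
        (tt a b * tt ((a * b)⁻¹ * g * (a * b)) ((a * b)⁻¹ * h * (a * b))) *
        tt (b⁻¹ * a * b) (b⁻¹ * h * b) := by
    rw [rel2 (g * a) h b, rel1 g a b,
      show b⁻¹ * (g * a) * b = (b⁻¹ * g * b) * (b⁻¹ * a * b) by group,
      rel1 (b⁻¹ * g * b) (b⁻¹ * a * b) (b⁻¹ * h * b),
      show (b⁻¹ * a * b)⁻¹ * (b⁻¹ * g * b) * (b⁻¹ * a * b) = (a * b)⁻¹ * g * (a * b) by group,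
      show (b⁻¹ * a * b)⁻¹ * (b⁻¹ * h * b) * (b⁻¹ * a * b) = (a * b)⁻¹ * h * (a * b) by group]
    group
  have h1 := mul_right_cancel (wayA.symm.trans wayB)
  exact mul_left_cancel h1

include hclass in
lemma comm_gen (a b g h : G) : tt a b * tt g h = tt g h * tt a b := by
  have key := keyeq a b ((a * b) * g * (a * b)⁻¹) ((a * b) * h * (a * b)⁻¹)
  rw [conj_comm hclass ((a * b) * g * (a * b)⁻¹) a b, conj_comm hclass ((a * b) * h * (a * b)⁻¹) a b,
    show (a * b)⁻¹ * ((a * b) * g * (a * b)⁻¹) * (a * b) = g by group,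
    show (a * b)⁻¹ * ((a * b) * h * (a * b)⁻¹) * (a * b) = h by group] at key
  exact key.symm

end TensorSquareAux

open TensorSquareAux in
theorem tensorSquare_comm_of_class_two {G : Type*} [Group G]
    (hclass : ∀ a b c : G, ⁅⁅a, b⁆, c⁆ = 1) :
    ∀ x y : TensorSquare G, x * y = y * x := by
  have step1 : ∀ (p : G × G) (x : TensorSquare G),
      x ∈ Subgroup.centralizer {PresentedGroup.of (rels := tensorSquareRels G) p} := by
    intro p x
    refine PresentedGroup.generated_by _ _ (fun j => ?_) x
    rw [Subgroup.mem_centralizer_iff]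
    rintro g rfl
    exact comm_gen hclass p.1 p.2 j.1 j.2
  intro x y
  have step2 : y ∈ Subgroup.centralizer ({x} : Set (TensorSquare G)) := by
    refine PresentedGroup.generated_by _ _ (fun j => ?_) y
    refine Subgroup.mem_centralizer_iff.mpr ?_
    intro z hz2
    rw [show z = x from hz2]
    exact (Subgroup.mem_centralizer_iff.mp (step1 j x) _ rfl).symm
  exact Subgroup.mem_centralizer_iff.mp step2 x rfl
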